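/- Let r ≥ 0 and let X be a finite quasimetric space. If M and M' are both r-minimal models of X, then M and M' are isometric (there is a distance-preserving bijection M → M'). In other words, the r-minimal model of a finite quasimetric space is unique up to isometry. -/

import Mathlib

open scoped ENNReal

class QuasiMetric (X : Type*) where
  qdist : X → X → ℝ≥0∞
  qdist_triangle : ∀ x y z : X, qdist x z ≤ qdist x y + qdist y z
  qdist_eq_zero_iff : ∀ x y : X, qdist x y = 0 ↔ x = y

open QuasiMetric

instance {X : Type*} [QuasiMetric X] (A : Set X) : QuasiMetric A where
  qdist a b := qdist a.1 b.1
  qdist_triangle a b c := qdist_triangle a.1 b.1 c.1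
  qdist_eq_zero_iff a b := (qdist_eq_zero_iff a.1 b.1).trans Subtype.coe_inj

/-- A map of quasimetric spaces is short (1-Lipschitz). -/
def IsShort {X Y : Type*} [QuasiMetric X] [QuasiMetric Y] (f : X → Y) : Prop :=
  ∀ x x' : X, qdist (f x) (f x') ≤ qdist x x'

/-- The distance `d(f,g) = sup_x d(f x, g x)` on maps. -/
noncomputable def mapDist {X Y : Type*} [QuasiMetric X] [QuasiMetric Y] (f g : X → Y) : ℝ≥0∞ :=
  ⨆ x : X, qdist (f x) (g x)

/-- Two short maps are `r`-homotopic if they are connected by a chain of short maps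
in which each consecutive pair is at distance `≤ r` in one direction or the other. -/
def MapHomotopic {X Y : Type*} [QuasiMetric X] [QuasiMetric Y] (r : ℝ) (f g : X → Y) : Prop :=
  Relation.ReflTransGen
    (fun u v : X → Y => IsShort u ∧ IsShort v ∧
      (mapDist u v ≤ ENNReal.ofReal r ∨ mapDist v u ≤ ENNReal.ofReal r)) f g

/-- `A ⊆ X` is an `r`-deformation retract of `X`. -/
def IsDefRetract {X : Type*} [QuasiMetric X] (r : ℝ) (A : Set X) : Prop :=
  ∃ ρ : X → A, IsShort ρ ∧ (∀ a : A, ρ (a : X) = a) ∧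
    MapHomotopic r (fun x => (ρ x : X)) id

/-- A quasimetric space is `r`-minimal if it has no proper `r`-deformation retract. -/
def RMinimal (r : ℝ) (X : Type*) [QuasiMetric X] : Prop :=
  ∀ A : Set X, IsDefRetract r A → A = Set.univ

/-- A distance-preserving bijection. -/
def IsIsometry {X Y : Type*} [QuasiMetric X] [QuasiMetric Y] (f : X → Y) : Prop :=
  Function.Bijective f ∧ ∀ x x' : X, qdist (f x) (f x') = qdist x x'

/-- Two quasimetric spaces are `r`-homotopy equivalent. -/
def RHomotopyEquivalent (r : ℝ) (X Y : Type*) [QuasiMetric X] [QuasiMetric Y] : Prop :=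
  ∃ f : X → Y, ∃ g : Y → X, IsShort f ∧ IsShort g ∧
    MapHomotopic r (g ∘ f) id ∧ MapHomotopic r (f ∘ g) id

section Aux
variable {X Y Z : Type*} [QuasiMetric X] [QuasiMetric Y] [QuasiMetric Z]

lemma isShort_comp {f : Y → Z} {g : X → Y} (hf : IsShort f) (hg : IsShort g) :
    IsShort (f ∘ g) := fun x x' => (hf _ _).trans (hg x x')

lemma isShort_id : IsShort (id : X → X) := fun _ _ => le_rfl

lemma isShort_iterate {h : X → X} (hh : IsShort h) (n : ℕ) : IsShort h^[n] := by
  induction n with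
  | zero => exact isShort_id
  | succ n ih => rw [Function.iterate_succ]; exact isShort_comp ih hh

lemma mapDist_comp_left {a : Y → Z} (ha : IsShort a) (u v : X → Y) :
    mapDist (a ∘ u) (a ∘ v) ≤ mapDist u v :=
  iSup_le fun x => (ha _ _).trans (le_iSup (fun x => qdist (u x) (v x)) x)

lemma mapDist_comp_right (u v : Y → Z) (b : X → Y) :
    mapDist (u ∘ b) (v ∘ b) ≤ mapDist u v :=
  iSup_le fun x => le_iSup (fun y => qdist (u y) (v y)) (b x)

lemma homotopic_comp_left {r : ℝ} {a : Y → Z} (ha : IsShort a) {u v : X → Y}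
    (h : MapHomotopic r u v) : MapHomotopic r (a ∘ u) (a ∘ v) :=
  Relation.ReflTransGen.lift (fun w => a ∘ w)
    (fun p q ⟨hp, hq, hd⟩ => ⟨isShort_comp ha hp, isShort_comp ha hq,
      hd.imp (le_trans (mapDist_comp_left ha p q)) (le_trans (mapDist_comp_left ha q p))⟩) _ _ h

lemma homotopic_comp_right {r : ℝ} {b : X → Y} (hb : IsShort b) {u v : Y → Z}
    (h : MapHomotopic r u v) : MapHomotopic r (u ∘ b) (v ∘ b) :=
  Relation.ReflTransGen.lift (fun w => w ∘ b)
    (fun p q ⟨hp, hq, hd⟩ => ⟨isShort_comp hp hb, isShort_comp hq hb,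
      hd.imp (le_trans (mapDist_comp_right p q b)) (le_trans (mapDist_comp_right q p b))⟩) _ _ h

lemma homotopic_iterate {r : ℝ} {h : X → X} (hs : IsShort h)
    (hh : MapHomotopic r h id) : ∀ n, MapHomotopic r h^[n] id := by
  intro n
  induction n with
  | zero => exact Relation.ReflTransGen.refl
  | succ n ih =>
    rw [Function.iterate_succ']
    exact Relation.ReflTransGen.trans (homotopic_comp_left hs ih) hh

end Aux

lemma exists_idem_iterate {M : Type*} [Finite M] (h : M → M) :
    ∃ k, 1 ≤ k ∧ h^[k] ∘ h^[k] = h^[k] := by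
  obtain ⟨i, j, hne, hij⟩ := Finite.exists_ne_map_eq_of_infinite (fun n : ℕ => h^[n])
  wlog hlt : i < j generalizing i j
  · exact this j i hne.symm hij.symm (by omega)
  set p := j - i with hp
  have hp1 : 1 ≤ p := by omega
  have step : ∀ m, i ≤ m → h^[m + p] = h^[m] := by
    intro m hm
    have h1 : m + p = (m - i) + j := by omega
    have h2 : m = (m - i) + i := by omega
    rw [h1, Function.iterate_add, ← hij, ← Function.iterate_add, ← h2]
  have steps : ∀ n m, i ≤ m → h^[m + n * p] = h^[m] := by
    intro n
    induction n with
    | zero => simp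
    | succ n ih =>
      intro m hm
      have : m + (n + 1) * p = (m + n * p) + p := by ring
      rw [this, step _ (by omega), ih m hm]
  refine ⟨(i + 1) * p, by nlinarith, ?_⟩
  rw [← Function.iterate_add]
  exact steps (i + 1) ((i + 1) * p) (by nlinarith)

lemma surjective_of_homotopic_id {M : Type*} [QuasiMetric M] [Finite M] {r : ℝ}
    (h1 : RMinimal r M) {h : M → M} (hs : IsShort h) (hh : MapHomotopic r h id) :
    Function.Surjective h := by
  obtain ⟨k, hk1, hidem⟩ := exists_idem_iterate h
  set e := h^[k] with he
  have hes : IsShort e := isShort_iterate hs k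
  have heh : MapHomotopic r e id := homotopic_iterate hs hh k
  set A : Set M := Set.range e with hA
  have hretr : IsDefRetract r A := by
    refine ⟨fun x => ⟨e x, x, rfl⟩, ?_, ?_, heh⟩
    · intro x x'; exact hes x x'
    · rintro ⟨y, x, rfl⟩
      exact Subtype.ext (congrFun hidem x)
  have := h1 A hretr
  have hesurj : Function.Surjective e := by
    intro y
    have : y ∈ A := this ▸ Set.mem_univ y
    exact this
  intro y
  obtain ⟨x, hx⟩ := hesurj y
  refine ⟨h^[k-1] x, ?_⟩
  have : e x = h (h^[k-1] x) := by
    conv_lhs => rw [he, show k = (k-1) + 1 by omega, Function.iterate_succ',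
      Function.comp_apply]
  rw [← this, hx]

lemma isometry_of_short_bijective {M : Type*} [QuasiMetric M] [Finite M] {h : M → M}
    (hs : IsShort h) (hb : Function.Bijective h) :
    ∀ x y, qdist (h x) (h y) = qdist x y := by
  obtain ⟨i, j, hne, hij⟩ := Finite.exists_ne_map_eq_of_infinite (fun n : ℕ => h^[n])
  wlog hlt : i < j generalizing i j
  · exact this j i hne.symm hij.symm (by omega)
  have hiter : ∀ n, Function.Bijective h^[n] := fun n => hb.iterate n
  have hper : h^[j - i] = id := by
    funext x
    have : h^[i] (h^[j-i] x) = h^[i] x := by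
      rw [← Function.iterate_add_apply, show i + (j - i) = j by omega, hij]
    exact (hiter i).injective this
  intro x y
  refine le_antisymm (hs x y) ?_
  have : qdist x y = qdist (h^[j-i] x) (h^[j-i] y) := by rw [hper]; rfl
  rw [this, show j - i = (j - i - 1) + 1 by omega]
  calc qdist (h^[j-i-1+1] x) (h^[j-i-1+1] y)
      = qdist (h^[j-i-1] (h x)) (h^[j-i-1] (h y)) := by
        rw [Function.iterate_succ, Function.comp_apply, Function.comp_apply]
    _ ≤ qdist (h x) (h y) := isShort_iterate hs _ _ _


theorem stmt_6 {X M M' : Type*} [QuasiMetric X] [QuasiMetric M] [QuasiMetric M']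
    [Finite X] [Finite M] [Finite M'] (r : ℝ) (hr : 0 ≤ r)
    (h1 : RMinimal r M) (h2 : RHomotopyEquivalent r M X)
    (h3 : RMinimal r M') (h4 : RHomotopyEquivalent r M' X) :
    ∃ f : M → M', IsIsometry f := by
  obtain ⟨f₁, g₁, hf₁, hg₁, hgf₁, hfg₁⟩ := h2
  obtain ⟨f₂, g₂, hf₂, hg₂, hgf₂, hfg₂⟩ := h4
  set f : M → M' := g₂ ∘ f₁ with hf
  set g : M' → M := g₁ ∘ f₂ with hg
  have hfs : IsShort f := isShort_comp hg₂ hf₁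
  have hgs : IsShort g := isShort_comp hg₁ hf₂
  -- g ∘ f ∼ id on M
  have hgfh : MapHomotopic r (g ∘ f) id := by
    have k1 : MapHomotopic r (g₁ ∘ ((f₂ ∘ g₂) ∘ f₁)) (g₁ ∘ (id ∘ f₁)) :=
      homotopic_comp_left hg₁ (homotopic_comp_right hf₁ hfg₂)
    have e1 : (g₁ ∘ ((f₂ ∘ g₂) ∘ f₁)) = g ∘ f := rfl
    have e2 : (g₁ ∘ (id ∘ f₁)) = g₁ ∘ f₁ := rfl
    rw [e1, e2] at k1
    exact k1.trans hgf₁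
  have hfgh : MapHomotopic r (f ∘ g) id := by
    have k1 : MapHomotopic r (g₂ ∘ ((f₁ ∘ g₁) ∘ f₂)) (g₂ ∘ (id ∘ f₂)) :=
      homotopic_comp_left hg₂ (homotopic_comp_right hf₂ hfg₁)
    have e1 : (g₂ ∘ ((f₁ ∘ g₁) ∘ f₂)) = f ∘ g := rfl
    have e2 : (g₂ ∘ (id ∘ f₂)) = g₂ ∘ f₂ := rfl
    rw [e1, e2] at k1
    exact k1.trans hgf₂
  have hgf_surj : Function.Surjective (g ∘ f) :=
    surjective_of_homotopic_id h1 (isShort_comp hgs hfs) hgfh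
  have hfg_surj : Function.Surjective (f ∘ g) :=
    surjective_of_homotopic_id h3 (isShort_comp hfs hgs) hfgh
  have hgf_bij : Function.Bijective (g ∘ f) :=
    ⟨(Finite.injective_iff_surjective).2 hgf_surj, hgf_surj⟩
  have hiso : ∀ x y, qdist ((g ∘ f) x) ((g ∘ f) y) = qdist x y :=
    isometry_of_short_bijective (isShort_comp hgs hfs) hgf_bij
  refine ⟨f, ⟨hgf_bij.injective.of_comp, fun y => ?_⟩, fun x x' => ?_⟩
  · obtain ⟨z, hz⟩ := hfg_surj y
    exact ⟨g z, hz⟩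
  · refine le_antisymm (hfs x x') ?_
    calc qdist x x' = qdist (g (f x)) (g (f x')) := (hiso x x').symm
      _ ≤ qdist (f x) (f x') := hgs _ _
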